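/- For the cycle monomials f_m := y_{12}y_{23}···y_{m-1,m}y_{m,1} and the points p_m (the characteristic function of the m-cycle {(1,2),...,(m-1,m),(m,1)} viewed as a 0/1 off-diagonal matrix): f_i(g·p_j) = 0 for all i ≠ j and all g ∈ Sym(ℕ), while f_i(p_i) = 1. -/

import Mathlib

open MvPolynomial

/-- Index set of off-diagonal matrix entries. -/
def OffDiag : Type := {q : ℕ × ℕ // q.1 ≠ q.2}

variable (K : Type*) [Field K]

/-- The `m`-cycle monomial `f_m = y_{12} y_{23} ⋯ y_{m-1,m} y_{m,1}` (for `m ≥ 2`). -/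
noncomputable def cycleMon (m : ℕ) (hm : 2 ≤ m) : MvPolynomial OffDiag K :=
  ∏ i ∈ (Finset.Icc 1 m).attach,
    X (⟨(i.1, if i.1 = m then 1 else i.1 + 1), by
      have := Finset.mem_Icc.mp i.2
      dsimp only
      split_ifs <;> omega⟩ : OffDiag)

/-- `Sym(ℕ)` acting on off-diagonal matrices (points) by simultaneous row and
column permutation. -/
def actP (σ : Equiv.Perm ℕ) (p : OffDiag → K) : OffDiag → K :=
  fun q => p ⟨(σ q.1.1, σ q.1.2), fun h => q.2 (σ.injective h)⟩

/-- The point `p_m`: the characteristic function of the directed `m`-cycle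
`(1,2), (2,3), …, (m-1,m), (m,1)` viewed as a 0/1 off-diagonal matrix. -/
def cyclePoint (m : ℕ) : OffDiag → K :=
  fun q => if q.1.1 ∈ Finset.Icc 1 m ∧ q.1.2 = (if q.1.1 = m then 1 else q.1.1 + 1)
    then 1 else 0

lemma aux_mod_succ {m : ℕ} (hm : 2 ≤ m) (t : ℕ) :
    (if t % m + 1 = m then 1 else t % m + 1 + 1) = (t + 1) % m + 1 := by
  have h0 : (t + 1) % m = (t % m + 1) % m := by
    rw [Nat.add_mod, Nat.one_mod_eq_one.mpr (by omega)]
  have h1 : t % m < m := Nat.mod_lt _ (by omega)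
  rcases eq_or_ne (t % m + 1) m with h | h
  · rw [if_pos h, h0, h, Nat.mod_self]
  · rw [if_neg h, h0, Nat.mod_eq_of_lt (show t % m + 1 < m by omega)]

/-- `f_i(g • p_j) = 0` for all `i ≠ j` and all `g ∈ Sym(ℕ)`,
while `f_i(p_i) = 1`. -/
theorem cycleMon_eval_cyclePoint :
    (∀ i j (hi : 2 ≤ i) (_hj : 2 ≤ j), i ≠ j → ∀ σ : Equiv.Perm ℕ,
      eval (actP K σ (cyclePoint K j)) (cycleMon K i hi) = 0) ∧
    (∀ i (hi : 2 ≤ i), eval (cyclePoint K i) (cycleMon K i hi) = 1) := by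
  constructor
  · intro i j hi hj hne σ
    rw [cycleMon, map_prod]
    refine (Finset.prod_congr rfl fun x _ => eval_X _).trans ?_
    rw [Finset.prod_eq_zero_iff]
    by_contra hc
    push_neg at hc
    have H : ∀ k, k ∈ Finset.Icc 1 i →
        σ k ∈ Finset.Icc 1 j ∧
          σ (if k = i then 1 else k + 1) = (if σ k = j then 1 else σ k + 1) := by
      intro k hk
      have h := hc ⟨k, hk⟩ (Finset.mem_attach _ _)
      simp only [actP, cyclePoint] at h
      by_contra hC
      rw [if_neg hC] at h
      exact h rfl
    have hσ1 : σ 1 ∈ Finset.Icc 1 j := (H 1 (Finset.mem_Icc.mpr ⟨le_refl _, by omega⟩)).1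
    rw [Finset.mem_Icc] at hσ1
    set s := σ 1 - 1 with hs
    have hsj : s < j := by omega
    have hσ1s : σ 1 = s + 1 := by omega
    have claim : ∀ t, σ (t % i + 1) = (s + t) % j + 1 := by
      intro t
      induction t with
      | zero =>
        simp only [Nat.zero_mod, Nat.add_zero]
        rw [Nat.mod_eq_of_lt hsj]
        exact hσ1s
      | succ t ih =>
        have hk : t % i + 1 ∈ Finset.Icc 1 i := by
          have : t % i < i := Nat.mod_lt _ (by omega)
          rw [Finset.mem_Icc]; omega
        have h2 := (H _ hk).2
        rw [ih] at h2
        rw [aux_mod_succ hi] at h2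
        calc σ ((t + 1) % i + 1) = if (s + t) % j + 1 = j then 1 else (s + t) % j + 1 + 1 := h2
        _ = (s + t + 1) % j + 1 := aux_mod_succ hj _
        _ = (s + (t + 1)) % j + 1 := by ring_nf
    have hdvd : j ∣ i := by
      have h := claim i
      rw [Nat.mod_self, hσ1s] at h
      have : (s + i) % j = s % j := by rw [Nat.mod_eq_of_lt hsj]; omega
      have := (Nat.modEq_iff_dvd' (Nat.le_add_right s i)).mp this.symm
      simpa using this
    have hji : j < i := lt_of_le_of_ne (Nat.le_of_dvd (by omega) hdvd) (Ne.symm hne)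
    have h := claim j
    rw [Nat.mod_eq_of_lt hji, Nat.add_mod_right, Nat.mod_eq_of_lt hsj, ← hσ1s] at h
    have := σ.injective h
    omega
  · intro i hi
    rw [cycleMon, map_prod]
    refine (Finset.prod_congr rfl fun x _ => eval_X _).trans ?_
    apply Finset.prod_eq_one
    intro k _
    simp only [cyclePoint]
    rw [if_pos]
    exact ⟨k.2, trivial⟩
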